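/- For a field 𝕜 of characteristic 0 and natural numbers i, j, the composite of the comultiplication Λ^{i+j}V → Λ^iV ⊗ Λ^jV with the multiplication Λ^iV ⊗ Λ^jV → Λ^{i+j}V of the exterior algebra of a 𝕜-vector space V equals multiplication by the binomial coefficient C(i+j, i) on Λ^{i+j}V. -/
import Mathlib


open scoped TensorProduct

variable (𝕜 : Type) [Field 𝕜] (V : Type) [AddCommGroup V] [Module 𝕜 V]

/-- The wedge `v₁ ∧ … ∧ v_k`, as an element of the `k`-th exterior power `⋀[𝕜]^k V`. -/
noncomputable def wedge (k : ℕ) (v : Fin k → V) : ⋀[𝕜]^k V :=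
  ⟨ExteriorAlgebra.ιMulti 𝕜 k v, ExteriorAlgebra.ιMulti_range 𝕜 k ⟨v, rfl⟩⟩

/-- The `(i,j)`-shuffle permutation associated to a subset `S ⊆ {1,…,i+j}` of cardinality
`i`: it sends `{1,…,i}` order-preservingly onto `S` and `{i+1,…,i+j}` order-preservingly
onto the complement of `S`. -/
noncomputable def shufflePerm (i j : ℕ) (S : Finset (Fin (i + j))) (hS : S.card = i) :
    Equiv.Perm (Fin (i + j)) :=
  finSumFinEquiv.symm.trans
    ((Equiv.sumCongr (S.orderIsoOfFin hS).toEquiv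
        ((Sᶜ).orderIsoOfFin (by simp [Finset.card_compl, hS])).toEquiv).trans
      ((Equiv.sumCongr (Equiv.refl _) (Equiv.subtypeEquivRight (fun x => by simp))).trans
        (Equiv.sumCompl (· ∈ S))))

lemma wedge_span (n : ℕ) :
    Submodule.span 𝕜 (Set.range (wedge 𝕜 V n)) = ⊤ := by
  apply Submodule.map_injective_of_injective (Submodule.injective_subtype (⋀[𝕜]^n V))
  rw [Submodule.map_span, Submodule.map_top, Submodule.range_subtype]
  have : (⋀[𝕜]^n V).subtype '' Set.range (wedge 𝕜 V n)
      = Set.range (ExteriorAlgebra.ιMulti 𝕜 n (M := V)) := by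
    rw [← Set.range_comp]; rfl
  rw [this, ExteriorAlgebra.ιMulti_span_fixedDegree]

lemma wedge_perm (n : ℕ) (v : Fin n → V) (σ : Equiv.Perm (Fin n)) :
    wedge 𝕜 V n (v ∘ σ) = ((Equiv.Perm.sign σ : ℤ)) • wedge 𝕜 V n v := by
  apply Subtype.ext
  show ExteriorAlgebra.ιMulti 𝕜 n (v ∘ σ) = _
  rw [AlternatingMap.map_perm, Units.smul_def]
  rfl

set_option linter.unusedSectionVars false in
lemma append_eq (i j : ℕ) (S : Finset (Fin (i + j))) (hS : S.card = i)
    (hS' : Sᶜ.card = j) (v : Fin (i+j) → V) :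
    Fin.append (fun k => v (S.orderIsoOfFin hS k)) (fun k => v ((Sᶜ).orderIsoOfFin hS' k))
      = v ∘ (shufflePerm i j S hS) := by
  funext x
  obtain ⟨y, rfl⟩ := finSumFinEquiv.surjective x
  cases y with
  | inl a => simp [shufflePerm, Fin.append_left]
  | inr b => simp [shufflePerm, Fin.append_right]

/-- For a field `𝕜` of characteristic `0` and `i, j ∈ ℕ`, the composite of
the comultiplication `Λ^{i+j}V → Λ^iV ⊗ Λ^jV` of the exterior bialgebra (the `(i,j)`-th
component of the coproduct determined by `Δ(v) = v⊗1 + 1⊗v`, characterized on wedges by the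
signed sum over `(i,j)`-shuffles) with the multiplication `Λ^iV ⊗ Λ^jV → Λ^{i+j}V` (the
wedge product) equals multiplication by the binomial coefficient `C(i+j, i)` on
`Λ^{i+j}V`. -/
theorem stmt_18 (𝕜 : Type) [Field 𝕜] [CharZero 𝕜] (V : Type) [AddCommGroup V] [Module 𝕜 V]
    (i j : ℕ)
    (Δ : (⋀[𝕜]^(i+j) V) →ₗ[𝕜] ((⋀[𝕜]^i V) ⊗[𝕜] (⋀[𝕜]^j V)))
    (hΔ : ∀ v : Fin (i + j) → V,
      Δ (wedge 𝕜 V (i+j) v) =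
        ∑ S ∈ (Finset.powersetCard i (Finset.univ : Finset (Fin (i+j)))).attach,
          ((Equiv.Perm.sign
              (shufflePerm i j S.1 (Finset.mem_powersetCard.mp S.2).2) : ℤ) •
            (wedge 𝕜 V i
                (fun k => v (S.1.orderIsoOfFin (Finset.mem_powersetCard.mp S.2).2 k)) ⊗ₜ[𝕜]
              wedge 𝕜 V j
                (fun k => v ((S.1ᶜ).orderIsoOfFin
                  (by simp [Finset.card_compl, (Finset.mem_powersetCard.mp S.2).2]) k)))))
    (mul : ((⋀[𝕜]^i V) ⊗[𝕜] (⋀[𝕜]^j V)) →ₗ[𝕜] (⋀[𝕜]^(i+j) V))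
    (hmul : ∀ (v : Fin i → V) (w : Fin j → V),
      mul (wedge 𝕜 V i v ⊗ₜ[𝕜] wedge 𝕜 V j w) = wedge 𝕜 V (i+j) (Fin.append v w)) :
    mul.comp Δ = ((i+j).choose i : 𝕜) • LinearMap.id := by
  apply LinearMap.ext_on (wedge_span 𝕜 V (i+j))
  rintro _ ⟨v, rfl⟩
  rw [LinearMap.comp_apply, hΔ, map_sum]
  have key : ∀ (S : Finset (Fin (i+j))) (hS : S.card = i) (h' : Sᶜ.card = j),
      mul ((Equiv.Perm.sign (shufflePerm i j S hS) : ℤ) •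
        (wedge 𝕜 V i (fun k => v (S.orderIsoOfFin hS k)) ⊗ₜ[𝕜]
         wedge 𝕜 V j (fun k => v ((Sᶜ).orderIsoOfFin h' k)))) = wedge 𝕜 V (i+j) v := by
    intro S hS h'
    rw [map_zsmul, hmul, append_eq, wedge_perm, smul_smul, ← Units.val_mul,
      Int.units_mul_self, Units.val_one, one_smul]
  rw [Finset.sum_congr rfl (fun S _ => key S.1 (Finset.mem_powersetCard.mp S.2).2
      (by simp [Finset.card_compl, (Finset.mem_powersetCard.mp S.2).2])),
    Finset.sum_const, Finset.card_attach, Finset.card_powersetCard, Finset.card_univ,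
    Fintype.card_fin]
  rw [LinearMap.smul_apply, LinearMap.id_apply, Nat.cast_smul_eq_nsmul]
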